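/- Let A, B be n×n positive definite complex matrices and let m, m', M, M' be positive reals satisfying either m'·I ≤ A ≤ m·I < M·I ≤ B ≤ M'·I or m'·I ≤ B ≤ m·I < M·I ≤ A ≤ M'·I in the Loewner order. If 0 < v ≤ 1/2, then A∇_v B ≤ 2(1 − v)(A∇B − A#B) − r₁(A#B − 2(A#_{3/4}B) + B) + K(h^{1/4}, 2)^{−r̂₁} · (A#_v B) in the Loewner order, where h = M/m, r = min{v, 1 − v}, r₁ = min{2r, 1 − 2r} and r̂₁ = min{2r₁, 1 − 2r₁}. -/

import Mathlib

open Matrix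
open scoped ComplexOrder

/-- Real power of a matrix, defined for Hermitian matrices via the spectral
decomposition (functional calculus); junk value otherwise. -/
noncomputable def mrpow {n : ℕ} (A : Matrix (Fin n) (Fin n) ℂ) (t : ℝ) :
    Matrix (Fin n) (Fin n) ℂ :=
  if h : A.IsHermitian then
    (h.eigenvectorUnitary : Matrix (Fin n) (Fin n) ℂ)
      * Matrix.diagonal (fun i => ((h.eigenvalues i ^ t : ℝ) : ℂ))
      * star (h.eigenvectorUnitary : Matrix (Fin n) (Fin n) ℂ)
  else A

/-- Weighted arithmetic mean `A ∇_v B = (1 - v) A + v B`. -/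
noncomputable def anabla {n : ℕ} (v : ℝ) (A B : Matrix (Fin n) (Fin n) ℂ) :
    Matrix (Fin n) (Fin n) ℂ :=
  ((1 - v : ℝ) : ℂ) • A + ((v : ℝ) : ℂ) • B

/-- Weighted geometric mean `A #_v B = A^{1/2} (A^{-1/2} B A^{-1/2})^v A^{1/2}`. -/
noncomputable def asharp {n : ℕ} (v : ℝ) (A B : Matrix (Fin n) (Fin n) ℂ) :
    Matrix (Fin n) (Fin n) ℂ :=
  mrpow A (1 / 2) * mrpow (mrpow A (-(1 / 2)) * B * mrpow A (-(1 / 2))) v * mrpow A (1 / 2)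

/-- Heinz operator mean `H_v(A, B) = (A #_v B + A #_{1-v} B) / 2`. -/
noncomputable def heinz {n : ℕ} (v : ℝ) (A B : Matrix (Fin n) (Fin n) ℂ) :
    Matrix (Fin n) (Fin n) ℂ :=
  ((1 / 2 : ℝ) : ℂ) • (asharp v A B + asharp (1 - v) A B)

/-- The Loewner order: `loewner X Y` iff `Y - X` is positive semidefinite. -/
def loewner {n : ℕ} (X Y : Matrix (Fin n) (Fin n) ℂ) : Prop := (Y - X).PosSemidef

/-- The Kantorovich constant `K(t, 2) = (t + 1)^2 / (4 t)`. -/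
noncomputable def Kant (t : ℝ) : ℝ := (t + 1) ^ 2 / (4 * t)

namespace StmtAux

/-! ### Scalar inequalities -/

lemma Kant_one_le {t : ℝ} (ht : 0 < t) : 1 ≤ Kant t := by
  rw [Kant, le_div_iff₀ (by linarith)]
  nlinarith [sq_nonneg (t-1)]

lemma Kant_mono {H t : ℝ} (hH : 1 ≤ H) (ht : 0 < t) (hr : H ≤ t ∨ t ≤ 1/H) :
    Kant H ≤ Kant t := by
  have hH0 : 0 < H := by linarith
  rw [Kant, Kant, div_le_div_iff₀ (by linarith) (by linarith)]
  rcases hr with hr | hr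
  · nlinarith [mul_nonneg (sub_nonneg.2 hr) (by nlinarith : (0:ℝ) ≤ H * t - 1)]
  · have h2 : H * t ≤ 1 := by
      calc H * t ≤ H * (1/H) := by nlinarith
      _ = 1 := by field_simp
    have h3 : t ≤ H := by nlinarith
    nlinarith [mul_nonneg (sub_nonneg.2 h3) (sub_nonneg.2 h2)]

lemma ZSF {u t : ℝ} (hu0 : 0 ≤ u) (hu1 : u ≤ 1) (ht : 0 < t) :
    Kant t ^ (min u (1-u)) * t ^ u ≤ (1-u) + u * t := by
  have hK : ((1+t)/2)^(2:ℝ) = Kant t * t := by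
    rw [Real.rpow_two, Kant]
    field_simp
    ring
  have hKpos : 0 < Kant t := lt_of_lt_of_le one_pos (Kant_one_le ht)
  have hp : (0:ℝ) ≤ (1+t)/2 := by linarith
  rcases le_total u (1/2) with hu | hu
  · have hmin : min u (1-u) = u := min_eq_left (by linarith)
    rw [hmin]
    have h1 := Real.geom_mean_le_arith_mean2_weighted
      (by linarith : (0:ℝ) ≤ 1 - 2*u) (by linarith : (0:ℝ) ≤ 2*u)
      (zero_le_one) hp (by ring)
    have h2 : ((1:ℝ)) ^ (1-2*u) * ((1+t)/2) ^ (2*u) = Kant t ^ u * t ^ u := by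
      rw [Real.one_rpow, one_mul, Real.rpow_mul hp 2 u, hK,
        Real.mul_rpow hKpos.le ht.le]
    rw [h2] at h1
    linarith [h1]
  · have hmin : min u (1-u) = 1-u := min_eq_right (by linarith)
    rw [hmin]
    have h1 := Real.geom_mean_le_arith_mean2_weighted
      (by linarith : (0:ℝ) ≤ 2 - 2*u) (by linarith : (0:ℝ) ≤ 2*u - 1)
      hp ht.le (by ring)
    have h2 : ((1+t)/2) ^ (2-2*u) * t ^ (2*u-1) = Kant t ^ (1-u) * t ^ u := by
      rw [show (2-2*u : ℝ) = 2 * (1-u) by ring, Real.rpow_mul hp 2 (1-u), hK,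
        Real.mul_rpow hKpos.le ht.le, mul_assoc, ← Real.rpow_add ht]
      ring_nf
    rw [h2] at h1
    linarith [h1]

lemma TK {u H s : ℝ} (hu0 : 0 ≤ u) (hu1 : u ≤ 1) (hH : 1 ≤ H) (hs : 0 < s)
    (hr : H ≤ s ∨ s ≤ 1/H) :
    (1+u)*s - u ≤ Kant H ^ (-(min u (1-u))) * s ^ (1+u) := by
  have hH0 : 0 < H := by linarith
  have hKH : 1 ≤ Kant H := Kant_one_le hH0
  have hrm : 0 ≤ min u (1-u) := le_min hu0 (by linarith)
  set k := Kant H ^ (min u (1-u)) with hk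
  have hk1 : 1 ≤ k := Real.one_le_rpow hKH hrm
  have hk0 : 0 < k := by linarith
  have ht : 0 < 1/s := by positivity
  have hrange : H ≤ 1/s ∨ 1/s ≤ 1/H := by
    rcases hr with h | h
    · right
      rw [div_le_div_iff₀ hs hH0]
      linarith
    · left
      rw [le_div_iff₀ hs]
      calc H * s ≤ H * (1/H) := by nlinarith
      _ = 1 := by field_simp
  have hZ := ZSF hu0 hu1 ht
  have hKt : k ≤ Kant (1/s) ^ (min u (1-u)) :=
    Real.rpow_le_rpow (by linarith) (Kant_mono hH ht hrange) hrm
  have htu : (0:ℝ) < (1/s)^u := Real.rpow_pos_of_pos ht u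
  have hsu : (0:ℝ) < s ^ u := Real.rpow_pos_of_pos hs u
  have h3 : k * (1/s)^u ≤ (1-u) + u*(1/s) :=
    le_trans (mul_le_mul_of_nonneg_right hKt htu.le) hZ
  rw [one_div, Real.inv_rpow hs.le] at h3
  have h4 : k ≤ ((1-u) + u*(s⁻¹)) * s^u := by
    have := mul_le_mul_of_nonneg_right h3 hsu.le
    rwa [mul_assoc, inv_mul_cancel₀ (ne_of_gt hsu), mul_one] at this
  set d := (1-u)*s + u with hd'
  have hd : 0 < d := by
    rcases eq_or_lt_of_le hu0 with h | h
    · rw [hd', ← h]; simpa using hs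
    · nlinarith [mul_nonneg (sub_nonneg.2 hu1) hs.le]
  have h4' : ((1-u) + u*(s⁻¹)) * s^u = (d / s) * s^u := by
    rw [hd']; field_simp
  rw [h4'] at h4
  have h5 : k * s^2 ≤ d * s^(1+u) := by
    calc k * s^2 ≤ ((d/s)*s^u) * s^2 := mul_le_mul_of_nonneg_right h4 (sq_nonneg s)
    _ = d * s^(1+u) := by
        rw [Real.rpow_add hs, Real.rpow_one]
        field_simp
  have hq : ((1+u)*s-u) * d ≤ s^2 := by
    rw [hd']; nlinarith [sq_nonneg (u*(s-1))]
  have hkinv : Kant H ^ (-(min u (1-u))) = k⁻¹ := by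
    rw [Real.rpow_neg (by linarith : (0:ℝ) ≤ Kant H)]
  rw [hkinv]
  rcases le_or_gt ((1+u)*s-u) 0 with hneg | hpos
  · have hpos2 : 0 < k⁻¹ * s^(1+u) := by positivity
    linarith
  · have h6 : ((1+u)*s-u) * k * d ≤ k * s^2 := by
      calc ((1+u)*s-u) * k * d = k * (((1+u)*s-u) * d) := by ring
      _ ≤ k * s^2 := mul_le_mul_of_nonneg_left hq hk0.le
    have h7 : ((1+u)*s-u) * k * d ≤ s^(1+u) * d := by
      rw [mul_comm (s^(1+u)) d]; exact le_trans h6 h5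
    have h8 : ((1+u)*s-u) * k ≤ s^(1+u) := le_of_mul_le_mul_right h7 hd
    rw [inv_mul_eq_div, le_div_iff₀ hk0]
    exact h8

lemma Ekey {w H s : ℝ} (hw1 : 1 ≤ w) (hw2 : w ≤ 2) (hH : 1 ≤ H) (hs : 0 < s)
    (hr : H ≤ s ∨ s ≤ 1/H) :
    (1-w) + w*s^2 + (min (w-1) (2-w))*(s-1)^2
      ≤ Kant H ^ (-(min (2*(min (w-1) (2-w))) (1 - 2*(min (w-1) (2-w))))) * s^(2*w) := by
  rcases le_total w (3/2) with hw | hw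
  · have hmin : min (w-1) (2-w) = w-1 := min_eq_left (by linarith)
    rw [hmin]
    set u := 2*w - 2 with hu'
    have hmm : min (2*(w-1)) (1 - 2*(w-1)) = min u (1-u) := by
      rw [hu']; ring_nf
    rw [hmm]
    have h1 := TK (u := u) (by rw [hu']; linarith) (by rw [hu']; linarith) hH hs hr
    have h2 : ((1+u)*s - u) * s ≤ (Kant H ^ (-(min u (1-u))) * s ^ (1+u)) * s :=
      mul_le_mul_of_nonneg_right h1 hs.le
    have h3 : (Kant H ^ (-(min u (1-u))) * s ^ (1+u)) * s
        = Kant H ^ (-(min u (1-u))) * s ^ (2*w) := by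
      rw [mul_assoc, ← Real.rpow_add_one hs.ne' (1+u)]
      congr 2
      rw [hu']; ring
    rw [h3] at h2
    calc (1-w) + w*s^2 + (w-1)*(s-1)^2 = ((1+u)*s - u) * s := by rw [hu']; ring
    _ ≤ _ := h2
  · have hmin : min (w-1) (2-w) = 2-w := min_eq_right (by linarith)
    rw [hmin]
    set u := 2*w - 3 with hu'
    have hmm : min (2*(2-w)) (1 - 2*(2-w)) = min u (1-u) := by
      rw [hu', min_comm]; ring_nf
    rw [hmm]
    have h1 := TK (u := u) (by rw [hu']; linarith) (by rw [hu']; linarith) hH hs hr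
    have h2 : ((1+u)*s - u) * s^2 ≤ (Kant H ^ (-(min u (1-u))) * s ^ (1+u)) * s^2 :=
      mul_le_mul_of_nonneg_right h1 (sq_nonneg s)
    have h3 : (Kant H ^ (-(min u (1-u))) * s ^ (1+u)) * s^2
        = Kant H ^ (-(min u (1-u))) * s ^ (2*w) := by
      rw [sq, ← mul_assoc, mul_assoc _ (s ^ (1+u)) s, ← Real.rpow_add_one hs.ne' (1+u),
        mul_assoc, ← Real.rpow_add_one hs.ne' (1+u+1)]
      congr 2
      rw [hu']; ring
    rw [h3] at h2
    have hP : 0 ≤ (s-1)^2 * ((2*w-2)*s + (2*w-3)) :=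
      mul_nonneg (sq_nonneg _) (by nlinarith)
    calc (1-w) + w*s^2 + (2-w)*(s-1)^2
        ≤ ((1+u)*s - u) * s^2 := by rw [hu']; nlinarith
    _ ≤ _ := h2

lemma scalarMain {v h x r1 rh1 : ℝ} (hv0 : 0 < v) (hv : v ≤ 1/2) (hh : 1 < h)
    (hx : 0 < x)
    (hr1 : r1 = min (2*v) (1-2*v)) (hrh1 : rh1 = min (2*r1) (1-2*r1))
    (hrange : h ≤ x ∨ x ≤ 1/h) :
    0 ≤ Kant (h^((1:ℝ)/4)) ^ (-rh1) * x^v + (1-2*v)*x - 2*(1-v)*x^((1:ℝ)/2)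
        - r1*(x^((1:ℝ)/2) - 2*x^((3:ℝ)/4) + x) := by
  have hh0 : (0:ℝ) < h := by linarith
  set H := h ^ ((1:ℝ)/4) with hH'
  have hH : 1 ≤ H := Real.one_le_rpow hh.le (by norm_num)
  have hH0 : 0 < H := by linarith
  set s := x ^ (-((1:ℝ)/4)) with hs'
  have hs : 0 < s := Real.rpow_pos_of_pos hx _
  have hxq : 0 < x ^ ((1:ℝ)/4) := Real.rpow_pos_of_pos hx _
  have hsinv : s = (x ^ ((1:ℝ)/4))⁻¹ := by
    rw [hs', ← Real.rpow_neg hx.le]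
  have hsr : H ≤ s ∨ s ≤ 1/H := by
    rcases hrange with h1 | h1
    · right
      rw [hsinv, one_div H]
      have h3 : H ≤ x ^ ((1:ℝ)/4) := by
        rw [hH']
        exact Real.rpow_le_rpow hh0.le h1 (by norm_num)
      exact inv_anti₀ hH0 h3
    · left
      have h2 : x ^ ((1:ℝ)/4) ≤ (1/h) ^ ((1:ℝ)/4) :=
        Real.rpow_le_rpow hx.le h1 (by norm_num)
      have h2' : (1/h : ℝ) ^ ((1:ℝ)/4) = H⁻¹ := by
        rw [one_div h, Real.inv_rpow hh0.le, hH']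
      rw [h2'] at h2
      rw [hsinv]
      calc H = (H⁻¹)⁻¹ := by rw [inv_inv]
      _ ≤ (x ^ ((1:ℝ)/4))⁻¹ := inv_anti₀ hxq h2
  set w := 2 - 2*v with hw'
  have hmin : min (w-1) (2-w) = r1 := by
    rw [hr1, hw', min_comm]
    ring_nf
  have hE := Ekey (w := w) (H := H) (s := s) (by rw [hw']; linarith)
    (by rw [hw']; linarith) hH hs hsr
  rw [hmin, ← hrh1] at hE
  have e1 : s ^ (2*w) = x ^ (v-1) := by
    rw [hs', ← Real.rpow_mul hx.le]
    congr 1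
    rw [hw']; ring
  have e2 : x ^ (v-1) * x = x ^ v := by
    rw [← Real.rpow_add_one hx.ne' (v-1)]
    ring_nf
  have e3 : s^2 * x = x ^ ((1:ℝ)/2) := by
    rw [← Real.rpow_natCast s 2, hs', ← Real.rpow_mul hx.le,
      ← Real.rpow_add_one hx.ne']
    norm_num
  have e4 : s * x = x ^ ((3:ℝ)/4) := by
    rw [hs', ← Real.rpow_add_one hx.ne']
    norm_num
  have hmul := mul_le_mul_of_nonneg_right hE hx.le
  have key : (2*v-1)*x + (2-2*v)*(x^((1:ℝ)/2)) + r1*(x^((1:ℝ)/2) - 2*(x^((3:ℝ)/4)) + x)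
      ≤ Kant H ^ (-rh1) * x ^ v := by
    calc (2*v-1)*x + (2-2*v)*(x^((1:ℝ)/2)) + r1*(x^((1:ℝ)/2) - 2*(x^((3:ℝ)/4)) + x)
        = ((1-w) + w*s^2 + r1*(s-1)^2) * x := by rw [← e3, ← e4, hw']; ring
      _ ≤ Kant H ^ (-rh1) * s ^ (2*w) * x := hmul
      _ = Kant H ^ (-rh1) * x ^ v := by rw [mul_assoc, e1, e2]
  linarith [key]

/-! ### Matrix functional-calculus lemmas -/

variable {n : ℕ} {Y : Matrix (Fin n) (Fin n) ℂ}

lemma mrpow_eq (hY : Y.IsHermitian) (t : ℝ) :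
    mrpow Y t = (hY.eigenvectorUnitary : Matrix (Fin n) (Fin n) ℂ)
      * Matrix.diagonal (fun i => ((hY.eigenvalues i ^ t : ℝ) : ℂ))
      * star (hY.eigenvectorUnitary : Matrix (Fin n) (Fin n) ℂ) := by
  rw [mrpow, dif_pos hY]

lemma VsV (hY : Y.IsHermitian) :
    (hY.eigenvectorUnitary : Matrix (Fin n) (Fin n) ℂ)
      * star (hY.eigenvectorUnitary : Matrix (Fin n) (Fin n) ℂ) = 1 :=
  Unitary.mul_star_self_of_mem hY.eigenvectorUnitary.prop

lemma sVV (hY : Y.IsHermitian) :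
    star (hY.eigenvectorUnitary : Matrix (Fin n) (Fin n) ℂ)
      * (hY.eigenvectorUnitary : Matrix (Fin n) (Fin n) ℂ) = 1 :=
  Unitary.star_mul_self_of_mem hY.eigenvectorUnitary.prop

lemma conj_mul (hY : Y.IsHermitian) (D E : Matrix (Fin n) (Fin n) ℂ) :
    ((hY.eigenvectorUnitary : Matrix (Fin n) (Fin n) ℂ) * D
        * star (hY.eigenvectorUnitary : Matrix (Fin n) (Fin n) ℂ))
      * ((hY.eigenvectorUnitary : Matrix (Fin n) (Fin n) ℂ) * E
        * star (hY.eigenvectorUnitary : Matrix (Fin n) (Fin n) ℂ))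
    = (hY.eigenvectorUnitary : Matrix (Fin n) (Fin n) ℂ) * (D * E)
        * star (hY.eigenvectorUnitary : Matrix (Fin n) (Fin n) ℂ) := by
  have h : ∀ Z : Matrix (Fin n) (Fin n) ℂ,
      star (hY.eigenvectorUnitary : Matrix (Fin n) (Fin n) ℂ)
        * ((hY.eigenvectorUnitary : Matrix (Fin n) (Fin n) ℂ) * Z) = Z := by
    intro Z
    rw [← Matrix.mul_assoc, sVV hY, Matrix.one_mul]
  simp only [Matrix.mul_assoc, h]

lemma mrpow_mul (hY : Y.PosDef) (s t : ℝ) :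
    mrpow Y s * mrpow Y t = mrpow Y (s + t) := by
  rw [mrpow_eq hY.1, mrpow_eq hY.1, mrpow_eq hY.1, conj_mul hY.1,
    Matrix.diagonal_mul_diagonal]
  have hd : (fun i => ((hY.1.eigenvalues i ^ s : ℝ) : ℂ)
        * ((hY.1.eigenvalues i ^ t : ℝ) : ℂ))
      = fun i => ((hY.1.eigenvalues i ^ (s + t) : ℝ) : ℂ) := by
    funext i
    rw [← Complex.ofReal_mul, ← Real.rpow_add (hY.eigenvalues_pos i)]
  rw [hd]

lemma mrpow_zero (hY : Y.IsHermitian) : mrpow Y 0 = 1 := by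
  rw [mrpow_eq hY]
  simp [Real.rpow_zero, Matrix.diagonal_one, VsV hY]

lemma mrpow_one (hY : Y.IsHermitian) : mrpow Y 1 = Y := by
  conv_rhs => rw [hY.spectral_theorem]
  rw [mrpow_eq hY]
  norm_num
  rfl

lemma mrpow_isHermitian (hY : Y.IsHermitian) (t : ℝ) : (mrpow Y t).IsHermitian := by
  rw [mrpow_eq hY]
  unfold Matrix.IsHermitian
  rw [Matrix.conjTranspose_mul, Matrix.conjTranspose_mul, Matrix.diagonal_conjTranspose,
    ← Matrix.star_eq_conjTranspose, ← Matrix.star_eq_conjTranspose, star_star]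
  have : star (fun i => ((hY.eigenvalues i ^ t : ℝ) : ℂ))
      = fun i => ((hY.eigenvalues i ^ t : ℝ) : ℂ) := by
    funext i
    simp [Complex.conj_ofReal]
  rw [this, Matrix.mul_assoc]

lemma psd_smul {c : ℝ} (hc : 0 ≤ c) {N : Matrix (Fin n) (Fin n) ℂ}
    (hN : N.PosSemidef) : (((c : ℝ) : ℂ) • N).PosSemidef := by
  rw [Matrix.posSemidef_iff_dotProduct_mulVec]
  constructor
  · unfold Matrix.IsHermitian
    rw [Matrix.conjTranspose_smul, hN.1.eq]
    congr 1
    simp [Complex.star_def, Complex.conj_ofReal]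
  · intro x
    rw [Matrix.smul_mulVec, dotProduct_smul, smul_eq_mul]
    exact mul_nonneg (Complex.zero_le_real.2 hc) (hN.dotProduct_mulVec_nonneg x)

lemma posdef_conj {B P : Matrix (Fin n) (Fin n) ℂ} (hB : B.PosDef)
    (hP : P.IsHermitian) {Q : Matrix (Fin n) (Fin n) ℂ} (hQP : Q * P = 1) :
    (P * B * P).PosDef := by
  rw [Matrix.posDef_iff_dotProduct_mulVec]
  constructor
  · unfold Matrix.IsHermitian
    rw [Matrix.conjTranspose_mul, Matrix.conjTranspose_mul, hP.eq, hB.1.eq,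
      Matrix.mul_assoc]
  · intro x hx
    have hPx : P *ᵥ x ≠ 0 := by
      intro h0
      apply hx
      have : Q *ᵥ (P *ᵥ x) = Q *ᵥ 0 := by rw [h0]
      rwa [Matrix.mulVec_mulVec, hQP, Matrix.one_mulVec, Matrix.mulVec_zero] at this
    have e : dotProduct (star x) ((P * B * P) *ᵥ x)
        = dotProduct (star (P *ᵥ x)) (B *ᵥ (P *ᵥ x)) := by
      rw [← Matrix.mulVec_mulVec, ← Matrix.mulVec_mulVec, Matrix.star_mulVec, hP.eq,
        ← Matrix.dotProduct_mulVec]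
    rw [e]
    exact hB.dotProduct_mulVec_pos hPx

lemma conj_back (hY : Y.IsHermitian) (D : Matrix (Fin n) (Fin n) ℂ) :
    star (hY.eigenvectorUnitary : Matrix (Fin n) (Fin n) ℂ)
      * ((hY.eigenvectorUnitary : Matrix (Fin n) (Fin n) ℂ) * D
        * star (hY.eigenvectorUnitary : Matrix (Fin n) (Fin n) ℂ))
      * (hY.eigenvectorUnitary : Matrix (Fin n) (Fin n) ℂ) = D := by
  simp only [Matrix.mul_assoc]
  rw [sVV hY, Matrix.mul_one, ← Matrix.mul_assoc, sVV hY, Matrix.one_mul]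

lemma smul_one_diag (c : ℂ) :
    c • (1 : Matrix (Fin n) (Fin n) ℂ) = diagonal (fun _ => c) := by
  ext i j
  rcases eq_or_ne i j with h | h
  · subst h; simp
  · simp [Matrix.one_apply_ne h, Matrix.diagonal_apply_ne _ h]

lemma conj_diag_of_sub (hY : Y.IsHermitian) {c : ℝ}
    (hp : (Y - ((c : ℝ) : ℂ) • 1).PosSemidef) (i : Fin n) : c ≤ hY.eigenvalues i := by
  have hconj := hp.mul_mul_conjTranspose_same
    (star (hY.eigenvectorUnitary : Matrix (Fin n) (Fin n) ℂ))
  rw [← Matrix.star_eq_conjTranspose, star_star] at hconj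
  have b1 : star (hY.eigenvectorUnitary : Matrix (Fin n) (Fin n) ℂ) * Y
      * (hY.eigenvectorUnitary : Matrix (Fin n) (Fin n) ℂ)
      = diagonal (RCLike.ofReal ∘ hY.eigenvalues) := by
    have h2 := congrArg (fun Z => star (hY.eigenvectorUnitary : Matrix (Fin n) (Fin n) ℂ)
      * Z * (hY.eigenvectorUnitary : Matrix (Fin n) (Fin n) ℂ)) hY.spectral_theorem
    rw [h2, Unitary.conjStarAlgAut_apply, conj_back hY]
  have b2 : star (hY.eigenvectorUnitary : Matrix (Fin n) (Fin n) ℂ) * (((c:ℝ):ℂ) • 1)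
      * (hY.eigenvectorUnitary : Matrix (Fin n) (Fin n) ℂ) = ((c:ℝ):ℂ) • 1 := by
    rw [Matrix.mul_smul, Matrix.mul_one, Matrix.smul_mul, sVV hY]
  have e : star (hY.eigenvectorUnitary : Matrix (Fin n) (Fin n) ℂ)
      * (Y - ((c:ℝ):ℂ) • 1) * (hY.eigenvectorUnitary : Matrix (Fin n) (Fin n) ℂ)
      = diagonal (fun i => ((hY.eigenvalues i - c : ℝ) : ℂ)) := by
    rw [Matrix.mul_sub, Matrix.sub_mul, b1, b2, smul_one_diag, Matrix.diagonal_sub]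
    congr 1
    funext j
    simp [Function.comp]
  rw [e] at hconj
  have h3 := (Matrix.posSemidef_diagonal_iff.1 hconj) i
  rw [Complex.zero_le_real] at h3
  linarith

lemma conj_diag_of_sub' (hY : Y.IsHermitian) {c : ℝ}
    (hp : (((c : ℝ) : ℂ) • 1 - Y).PosSemidef) (i : Fin n) : hY.eigenvalues i ≤ c := by
  have hconj := hp.mul_mul_conjTranspose_same
    (star (hY.eigenvectorUnitary : Matrix (Fin n) (Fin n) ℂ))
  rw [← Matrix.star_eq_conjTranspose, star_star] at hconj
  have b1 : star (hY.eigenvectorUnitary : Matrix (Fin n) (Fin n) ℂ) * Y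
      * (hY.eigenvectorUnitary : Matrix (Fin n) (Fin n) ℂ)
      = diagonal (RCLike.ofReal ∘ hY.eigenvalues) := by
    have h2 := congrArg (fun Z => star (hY.eigenvectorUnitary : Matrix (Fin n) (Fin n) ℂ)
      * Z * (hY.eigenvectorUnitary : Matrix (Fin n) (Fin n) ℂ)) hY.spectral_theorem
    rw [h2, Unitary.conjStarAlgAut_apply, conj_back hY]
  have b2 : star (hY.eigenvectorUnitary : Matrix (Fin n) (Fin n) ℂ) * (((c:ℝ):ℂ) • 1)
      * (hY.eigenvectorUnitary : Matrix (Fin n) (Fin n) ℂ) = ((c:ℝ):ℂ) • 1 := by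
    rw [Matrix.mul_smul, Matrix.mul_one, Matrix.smul_mul, sVV hY]
  have e : star (hY.eigenvectorUnitary : Matrix (Fin n) (Fin n) ℂ)
      * (((c:ℝ):ℂ) • 1 - Y) * (hY.eigenvectorUnitary : Matrix (Fin n) (Fin n) ℂ)
      = diagonal (fun i => ((c - hY.eigenvalues i : ℝ) : ℂ)) := by
    rw [Matrix.mul_sub, Matrix.sub_mul, b1, b2, smul_one_diag, Matrix.diagonal_sub]
    congr 1
    funext j
    simp [Function.comp]
  rw [e] at hconj
  have h3 := (Matrix.posSemidef_diagonal_iff.1 hconj) i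
  rw [Complex.zero_le_real] at h3
  linarith

lemma cadd (V sV A B : Matrix (Fin n) (Fin n) ℂ) :
    V * (A + B) * sV = V * A * sV + V * B * sV := by
  rw [Matrix.mul_add, Matrix.add_mul]

lemma csub (V sV A B : Matrix (Fin n) (Fin n) ℂ) :
    V * (A - B) * sV = V * A * sV - V * B * sV := by
  rw [Matrix.mul_sub, Matrix.sub_mul]

lemma csmul (c : ℂ) (V sV A : Matrix (Fin n) (Fin n) ℂ) :
    V * (c • A) * sV = c • (V * A * sV) := by
  rw [Matrix.mul_smul, Matrix.smul_mul]

end StmtAux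

open StmtAux in
theorem stmt_13 {n : ℕ} (A B : Matrix (Fin n) (Fin n) ℂ) (m m' M M' v h r r1 rh1 : ℝ)
    (hA : A.PosDef) (hB : B.PosDef)
    (hm' : 0 < m') (hm : 0 < m) (hM : 0 < M) (hM' : 0 < M') (hmM : m < M)
    (hcond : (loewner ((m' : ℂ) • 1) A ∧ loewner A ((m : ℂ) • 1) ∧
        loewner ((M : ℂ) • 1) B ∧ loewner B ((M' : ℂ) • 1)) ∨
      (loewner ((m' : ℂ) • 1) B ∧ loewner B ((m : ℂ) • 1) ∧
        loewner ((M : ℂ) • 1) A ∧ loewner A ((M' : ℂ) • 1)))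
    (hh : h = M / m) (hr : r = min v (1 - v))
    (hr1 : r1 = min (2 * r) (1 - 2 * r)) (hrh1 : rh1 = min (2 * r1) (1 - 2 * r1))
    (hv0 : 0 < v) (hv : v ≤ 1 / 2) :
    loewner (anabla v A B)
      (((2 * (1 - v) : ℝ) : ℂ) • (anabla (1 / 2) A B - asharp (1 / 2) A B)
        - ((r1 : ℝ) : ℂ) • (asharp (1 / 2) A B - (2 : ℂ) • asharp (3 / 4) A B + B)
        + ((Kant (h ^ ((1 : ℝ) / 4)) ^ (-rh1) : ℝ) : ℂ) • asharp v A B) := by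
  subst hh
  have hrv : r = v := by rw [hr]; exact min_eq_left (by linarith)
  rw [hrv] at hr1
  have hMm1 : (1:ℝ) < M / m := (one_lt_div hm).2 hmM
  set Q := mrpow A (1/2) with hQdef
  set P := mrpow A (-(1/2)) with hPdef
  set X := P * B * P with hXdef
  have hQP : Q * P = 1 := by
    rw [hQdef, hPdef, mrpow_mul hA, show (1/2 + -(1/2) : ℝ) = 0 by norm_num,
      mrpow_zero hA.1]
  have hPQ : P * Q = 1 := by
    rw [hQdef, hPdef, mrpow_mul hA, show (-(1/2) + 1/2 : ℝ) = 0 by norm_num,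
      mrpow_zero hA.1]
  have hQQ : Q * Q = A := by
    rw [hQdef, mrpow_mul hA, show (1/2 + 1/2 : ℝ) = 1 by norm_num, mrpow_one hA.1]
  have hPA : P * A = Q := by
    conv_lhs => rw [← mrpow_one hA.1]
    rw [hPdef, hQdef, mrpow_mul hA, show (-(1/2) + 1 : ℝ) = 1/2 by norm_num]
  have hPAP : P * A * P = 1 := by rw [hPA]; exact hQP
  have hQherm : Q.IsHermitian := hQdef ▸ mrpow_isHermitian hA.1 _
  have hPherm : P.IsHermitian := hPdef ▸ mrpow_isHermitian hA.1 _
  have hXpd : X.PosDef := hXdef ▸ posdef_conj hB hPherm hQP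
  have hXh : X.IsHermitian := hXpd.1
  have hQXQ : Q * X * Q = B := by
    rw [hXdef]
    simp only [Matrix.mul_assoc]
    rw [hPQ, Matrix.mul_one, ← Matrix.mul_assoc, hQP, Matrix.one_mul]
  set W := (hXh.eigenvectorUnitary : Matrix (Fin n) (Fin n) ℂ) with hW
  set μ := hXh.eigenvalues with hμ
  have hμpos : ∀ i, 0 < μ i := by
    intro i; rw [hμ]; exact hXpd.eigenvalues_pos i
  -- eigenvalue location
  have hrange : ∀ i, M/m ≤ μ i ∨ μ i ≤ 1/(M/m) := by
    rcases hcond with ⟨d1, d2, d3, d4⟩ | ⟨d1, d2, d3, d4⟩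
    · intro i; left
      have d3' : (B - ((M:ℝ):ℂ)•1).PosSemidef := d3
      have d2' : (((m:ℝ):ℂ)•1 - A).PosSemidef := d2
      have k1 := d3'.mul_mul_conjTranspose_same P
      rw [hPherm.eq] at k1
      have e1 : P * (B - ((M:ℝ):ℂ)•1) * P = X - ((M:ℝ):ℂ)•(P*P) := by
        rw [Matrix.mul_sub, Matrix.sub_mul, Matrix.mul_smul, Matrix.mul_one,
          Matrix.smul_mul, hXdef]
      rw [e1] at k1
      have k2 := d2'.mul_mul_conjTranspose_same P
      rw [hPherm.eq] at k2
      have e2 : P * (((m:ℝ):ℂ)•1 - A) * P = ((m:ℝ):ℂ)•(P*P) - 1 := by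
        rw [Matrix.mul_sub, Matrix.sub_mul, Matrix.mul_smul, Matrix.mul_one,
          Matrix.smul_mul, hPAP]
      rw [e2] at k2
      have k2' := psd_smul (c := M/m) (div_nonneg hM.le hm.le) k2
      have comb : X - ((M/m : ℝ):ℂ)•1
          = (X - ((M:ℝ):ℂ)•(P*P)) + ((M/m:ℝ):ℂ)•(((m:ℝ):ℂ)•(P*P) - 1) := by
        rw [smul_sub, smul_smul]
        have hcm : ((M/m:ℝ):ℂ) * ((m:ℝ):ℂ) = ((M:ℝ):ℂ) := by
          rw [← Complex.ofReal_mul]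
          congr 1
          field_simp
        rw [hcm]
        abel
      have hpsd : (X - ((M/m:ℝ):ℂ)•1).PosSemidef := by
        rw [comb]; exact k1.add k2'
      exact conj_diag_of_sub hXh hpsd i
    · intro i; right
      have d2' : (((m:ℝ):ℂ)•1 - B).PosSemidef := d2
      have d3' : (A - ((M:ℝ):ℂ)•1).PosSemidef := d3
      have k1 := d2'.mul_mul_conjTranspose_same P
      rw [hPherm.eq] at k1
      have e1 : P * (((m:ℝ):ℂ)•1 - B) * P = ((m:ℝ):ℂ)•(P*P) - X := by
        rw [Matrix.mul_sub, Matrix.sub_mul, Matrix.mul_smul, Matrix.mul_one,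
          Matrix.smul_mul, hXdef]
      rw [e1] at k1
      have k2 := d3'.mul_mul_conjTranspose_same P
      rw [hPherm.eq] at k2
      have e2 : P * (A - ((M:ℝ):ℂ)•1) * P = 1 - ((M:ℝ):ℂ)•(P*P) := by
        rw [Matrix.mul_sub, Matrix.sub_mul, Matrix.mul_smul, Matrix.mul_one,
          Matrix.smul_mul, hPAP]
      rw [e2] at k2
      have k2' := psd_smul (c := m/M) (div_nonneg hm.le hM.le) k2
      have comb : ((m/M : ℝ):ℂ)•1 - X
          = (((m:ℝ):ℂ)•(P*P) - X) + ((m/M:ℝ):ℂ)•(1 - ((M:ℝ):ℂ)•(P*P)) := by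
        rw [smul_sub, smul_smul]
        have hcm : ((m/M:ℝ):ℂ) * ((M:ℝ):ℂ) = ((m:ℝ):ℂ) := by
          rw [← Complex.ofReal_mul]
          congr 1
          field_simp
        rw [hcm]
        abel
      have hpsd : (((m/M:ℝ):ℂ)•1 - X).PosSemidef := by
        rw [comb]; exact k1.add k2'
      have := conj_diag_of_sub' hXh hpsd i
      have hmm' : (1:ℝ)/(M/m) = m/M := by field_simp
      rw [hmm']
      exact this
  -- scalar bound on eigenvalues
  have hφ : ∀ i, 0 ≤ (2*(1-v)) * ((1 - 1/2) + (1/2)*(μ i) - (μ i)^((1:ℝ)/2))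
      - r1 * ((μ i)^((1:ℝ)/2) - 2*((μ i)^((3:ℝ)/4)) + μ i)
      + (Kant ((M/m) ^ ((1:ℝ)/4)) ^ (-rh1)) * (μ i)^v
      - ((1-v) + v*(μ i)) := by
    intro i
    have hs := scalarMain hv0 hv hMm1 (hμpos i) hr1 hrh1 (hrange i)
    nlinarith [hs]
  -- representation lemmas
  have R1 : ∀ t : ℝ, mrpow X t = W * (diagonal fun i => ((μ i ^ t : ℝ) : ℂ)) * star W := by
    intro t; rw [mrpow_eq hXh t, hW, hμ]
  have a2 : W * (diagonal fun i => ((μ i : ℝ) : ℂ)) * star W = X := by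
    rw [hW, hμ]
    exact (hXh.spectral_theorem).symm
  have a3 : W * (1 : Matrix (Fin n) (Fin n) ℂ) * star W = 1 := by
    rw [Matrix.mul_one, hW]; exact VsV hXh
  set cC : ℝ := Kant ((M/m) ^ ((1:ℝ)/4)) ^ (-rh1) with hcC
  set D0 : Matrix (Fin n) (Fin n) ℂ := diagonal (fun i =>
    (((2*(1-v)) * ((1 - 1/2) + (1/2)*(μ i) - (μ i)^((1:ℝ)/2))
      - r1 * ((μ i)^((1:ℝ)/2) - 2*((μ i)^((3:ℝ)/4)) + μ i)
      + cC * (μ i)^v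
      - ((1-v) + v*(μ i)) : ℝ) : ℂ)) with hD0
  have hsplit : D0 =
      ((2 * (1 - v) : ℝ) : ℂ) • ((((1 - 1/2 : ℝ)) : ℂ) • (1 : Matrix (Fin n) (Fin n) ℂ)
          + (((1/2 : ℝ)) : ℂ) • (diagonal fun i => ((μ i : ℝ) : ℂ))
          - (diagonal fun i => ((μ i ^ ((1:ℝ)/2) : ℝ) : ℂ)))
        - ((r1 : ℝ) : ℂ) • ((diagonal fun i => ((μ i ^ ((1:ℝ)/2) : ℝ) : ℂ))
          - (2:ℂ) • (diagonal fun i => ((μ i ^ ((3:ℝ)/4) : ℝ) : ℂ))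
          + (diagonal fun i => ((μ i : ℝ) : ℂ)))
        + ((cC : ℝ) : ℂ) • (diagonal fun i => ((μ i ^ v : ℝ) : ℂ))
        - ((1 - v : ℝ) : ℂ) • (1 : Matrix (Fin n) (Fin n) ℂ)
        - ((v : ℝ) : ℂ) • (diagonal fun i => ((μ i : ℝ) : ℂ)) := by
    rw [hD0]
    ext i j
    rcases eq_or_ne i j with hij | hij
    · subst hij
      simp only [Matrix.diagonal_apply_eq, Matrix.add_apply, Matrix.sub_apply,
        Matrix.smul_apply, Matrix.one_apply_eq, smul_eq_mul]
      push_cast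
      ring
    · simp only [Matrix.diagonal_apply_ne _ hij, Matrix.add_apply, Matrix.sub_apply,
        Matrix.smul_apply, Matrix.one_apply_ne hij, smul_eq_mul]
      ring
  have hrep : W * D0 * star W =
      ((2 * (1 - v) : ℝ) : ℂ) • ((((1 - 1/2 : ℝ)) : ℂ) • (1 : Matrix (Fin n) (Fin n) ℂ)
          + (((1/2 : ℝ)) : ℂ) • X - mrpow X (1/2))
        - ((r1 : ℝ) : ℂ) • (mrpow X (1/2) - (2:ℂ) • mrpow X (3/4) + X)
        + ((cC : ℝ) : ℂ) • mrpow X v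
        - ((1 - v : ℝ) : ℂ) • (1 : Matrix (Fin n) (Fin n) ℂ) - ((v : ℝ) : ℂ) • X := by
    rw [hsplit]
    simp only [cadd, csub, csmul]
    rw [a3, a2, ← R1 ((1:ℝ)/2), ← R1 ((3:ℝ)/4), ← R1 v]
  have hD0psd : D0.PosSemidef := by
    rw [hD0]
    refine Matrix.posSemidef_diagonal_iff.2 (fun i => ?_)
    rw [Complex.zero_le_real]
    exact hφ i
  have hΔpsd := hD0psd.mul_mul_conjTranspose_same W
  rw [← Matrix.star_eq_conjTranspose, hrep] at hΔpsd
  have keyeq :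
      (((2 * (1 - v) : ℝ) : ℂ) • (anabla (1 / 2) A B - asharp (1 / 2) A B)
        - ((r1 : ℝ) : ℂ) • (asharp (1 / 2) A B - (2 : ℂ) • asharp (3 / 4) A B + B)
        + ((cC : ℝ) : ℂ) • asharp v A B) - anabla v A B
      = Q * (((2 * (1 - v) : ℝ) : ℂ) • ((((1 - 1/2 : ℝ)) : ℂ) • (1 : Matrix (Fin n) (Fin n) ℂ)
          + (((1/2 : ℝ)) : ℂ) • X - mrpow X (1/2))
        - ((r1 : ℝ) : ℂ) • (mrpow X (1/2) - (2:ℂ) • mrpow X (3/4) + X)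
        + ((cC : ℝ) : ℂ) • mrpow X v
        - ((1 - v : ℝ) : ℂ) • (1 : Matrix (Fin n) (Fin n) ℂ) - ((v : ℝ) : ℂ) • X) * Q := by
    simp only [asharp, anabla]
    simp only [← hPdef, ← hQdef, ← hXdef]
    simp only [Matrix.mul_add, Matrix.add_mul, Matrix.mul_sub, Matrix.sub_mul,
      Matrix.mul_smul, Matrix.smul_mul, Matrix.mul_one]
    rw [hQQ, hQXQ]
    module
  unfold loewner
  rw [keyeq]
  have hfin := hΔpsd.mul_mul_conjTranspose_same Q
  rw [hQherm.eq] at hfin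
  exact hfin
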